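/- (Main Theorem) The subgroup of GL(4, ZMod 5) generated by à and T̃ is exactly Γ̂: a matrix X over ZMod 5 is a product of the matrices Ã, T̃ and their inverses if and only if X is of the form !![1, n, 3*n^2+2*n, a; 0, 1, n, b; 0, 0, 1, c; 0, 0, 0, 1] for some n, a, b, c ∈ ZMod 5. -/
import Mathlib


open Matrix

instance : Fact (Nat.Prime 5) := ⟨by norm_num⟩

/-- The reduction mod 5 of `P⁻¹A⁻¹P`. -/
def Atil : Matrix (Fin 4) (Fin 4) (ZMod 5) :=
  !![1, 1, 0, 0; 0, 1, 1, 4; 0, 0, 1, 4; 0, 0, 0, 1]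

/-- The reduction mod 5 of `P⁻¹T⁻¹P`. -/
def Ttil : Matrix (Fin 4) (Fin 4) (ZMod 5) :=
  !![1, 0, 0, 0; 0, 1, 0, 0; 0, 0, 1, 1; 0, 0, 0, 1]

/-- `Ã` as an element of `GL(4, ℤ/5ℤ)`. -/
def AtilGL : GL (Fin 4) (ZMod 5) :=
  Matrix.GeneralLinearGroup.mkOfDetNeZero Atil (by decide)

/-- `T̃` as an element of `GL(4, ℤ/5ℤ)`. -/
def TtilGL : GL (Fin 4) (ZMod 5) :=
  Matrix.GeneralLinearGroup.mkOfDetNeZero Ttil (by decide)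

/-- The generic element of `Γ̂`. -/
def Mm (n a b c : ZMod 5) : Matrix (Fin 4) (Fin 4) (ZMod 5) :=
  !![1, n, 3 * n ^ 2 + 2 * n, a; 0, 1, n, b; 0, 0, 1, c; 0, 0, 0, 1]

lemma h5 : (5 : ZMod 5) = 0 := by decide

lemma Mm_congr {n a b c n' a' b' c' : ZMod 5} (h1 : n = n') (h2 : a = a')
    (h3 : b = b') (h4 : c = c') : Mm n a b c = Mm n' a' b' c' := by
  subst h1 h2 h3 h4; rfl

set_option maxHeartbeats 2000000 in
lemma Mm_mul (n a b c m a' b' c' : ZMod 5) :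
    Mm n a b c * Mm m a' b' c' =
      Mm (n + m) (a + a' + n * b' + (3 * n ^ 2 + 2 * n) * c')
        (b + b' + n * c') (c + c') := by
  ext i j
  fin_cases i <;> fin_cases j <;>
    simp [Mm, Matrix.mul_apply, Fin.sum_univ_succ, Matrix.vecHead, Matrix.vecTail] <;>
    first | ring1 | linear_combination (-(n * m)) * h5

lemma Mm_one : Mm 0 0 0 0 = 1 := by decide

lemma Ea_pow (k : ℕ) : Mm 0 1 0 0 ^ k = Mm 0 (k : ZMod 5) 0 0 := by
  induction k with
  | zero => simpa using Mm_one.symm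
  | succ k ih =>
    rw [pow_succ, ih, Mm_mul]
    push_cast
    exact Mm_congr (by ring) (by ring) (by ring) (by ring)

lemma Eb_pow (k : ℕ) : Mm 0 0 1 0 ^ k = Mm 0 0 (k : ZMod 5) 0 := by
  induction k with
  | zero => simpa using Mm_one.symm
  | succ k ih =>
    rw [pow_succ, ih, Mm_mul]
    push_cast
    exact Mm_congr (by ring) (by ring) (by ring) (by ring)

lemma Tt_pow (k : ℕ) : Mm 0 0 0 1 ^ k = Mm 0 0 0 (k : ZMod 5) := by
  induction k with
  | zero => simpa using Mm_one.symm
  | succ k ih =>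
    rw [pow_succ, ih, Mm_mul]
    push_cast
    exact Mm_congr (by ring) (by ring) (by ring) (by ring)

lemma A_pow (k : ℕ) :
    Mm 1 0 4 4 ^ k =
      Mm (k : ZMod 5) (4 * (k : ZMod 5) ^ 3 + (k : ZMod 5))
        (2 * (k : ZMod 5) ^ 2 + 2 * (k : ZMod 5)) (4 * (k : ZMod 5)) := by
  induction k with
  | zero => simpa using Mm_one.symm
  | succ k ih =>
    rw [pow_succ, ih, Mm_mul]
    push_cast
    exact Mm_congr (by ring) (by linear_combination (-1 : ZMod 5) * h5)
      (by ring) (by ring)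

lemma Atil_eq : Atil = Mm 1 0 4 4 := by decide

lemma Ttil_eq : Ttil = Mm 0 0 0 1 := by decide

lemma AtilGL_val : (AtilGL : Matrix (Fin 4) (Fin 4) (ZMod 5)) = Mm 1 0 4 4 :=
  Atil_eq

lemma TtilGL_val : (TtilGL : Matrix (Fin 4) (Fin 4) (ZMod 5)) = Mm 0 0 0 1 :=
  Ttil_eq

/-- `Eb = [A, T]` as an element of `GL`. -/
def EbGL : GL (Fin 4) (ZMod 5) := AtilGL * TtilGL * AtilGL ^ 4 * TtilGL ^ 4

/-- `Ea = [A, Eb]` as an element of `GL`. -/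
def EaGL : GL (Fin 4) (ZMod 5) := AtilGL * EbGL * AtilGL ^ 4 * EbGL ^ 4

lemma EbGL_val : (EbGL : Matrix (Fin 4) (Fin 4) (ZMod 5)) = Mm 0 0 1 0 := by
  show (Atil * Ttil * Atil ^ 4 * Ttil ^ 4 : Matrix (Fin 4) (Fin 4) (ZMod 5)) = _
  decide

lemma EaGL_val : (EaGL : Matrix (Fin 4) (Fin 4) (ZMod 5)) = Mm 0 1 0 0 := by
  have : (EaGL : Matrix (Fin 4) (Fin 4) (ZMod 5)) =
      Atil * (EbGL : Matrix (Fin 4) (Fin 4) (ZMod 5)) * Atil ^ 4 *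
        (EbGL : Matrix (Fin 4) (Fin 4) (ZMod 5)) ^ 4 := rfl
  rw [this, EbGL_val]
  decide

/-- The subgroup `Γ̂`. -/
def Gam : Subgroup (GL (Fin 4) (ZMod 5)) where
  carrier := {X | ∃ n a b c : ZMod 5,
    (X : Matrix (Fin 4) (Fin 4) (ZMod 5)) = Mm n a b c}
  one_mem' := ⟨0, 0, 0, 0, by rw [Mm_one]; rfl⟩
  mul_mem' := by
    rintro x y ⟨n, a, b, c, hx⟩ ⟨m, a', b', c', hy⟩
    exact ⟨n + m, a + a' + n * b' + (3 * n ^ 2 + 2 * n) * c',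
      b + b' + n * c', c + c', by rw [Units.val_mul, hx, hy, Mm_mul]⟩
  inv_mem' := by
    rintro x ⟨n, a, b, c, hx⟩
    refine ⟨-n, -a + n * b - (3 * n ^ 2 - 2 * n) * c, -b + n * c, -c, ?_⟩
    have h1 : Mm (-n) (-a + n * b - (3 * n ^ 2 - 2 * n) * c) (-b + n * c) (-c) *
        (x : Matrix (Fin 4) (Fin 4) (ZMod 5)) = 1 := by
      rw [hx, Mm_mul, ← Mm_one]
      exact Mm_congr (by ring) (by ring) (by ring) (by ring)
    have h2 : (x : Matrix (Fin 4) (Fin 4) (ZMod 5)) *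
        Mm (-n) (-a + n * b - (3 * n ^ 2 - 2 * n) * c) (-b + n * c) (-c) = 1 :=
      mul_eq_one_comm.mpr h1
    rw [Matrix.coe_units_inv x, Matrix.inv_eq_left_inv h1]

lemma gens_le : Subgroup.closure {AtilGL, TtilGL} ≤ Gam := by
  rw [Subgroup.closure_le]
  rintro x (rfl | rfl)
  · exact ⟨1, 0, 4, 4, AtilGL_val⟩
  · exact ⟨0, 0, 0, 1, TtilGL_val⟩

/-- Main Theorem: the subgroup of `GL(4, ℤ/5ℤ)` generated by `Ã` and `T̃`
is exactly `Γ̂`. -/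
theorem main_theorem (X : GL (Fin 4) (ZMod 5)) :
    X ∈ Subgroup.closure {AtilGL, TtilGL} ↔
      ∃ n a b c : ZMod 5,
        (X : Matrix (Fin 4) (Fin 4) (ZMod 5)) =
          !![1, n, 3 * n ^ 2 + 2 * n, a; 0, 1, n, b; 0, 0, 1, c; 0, 0, 0, 1] := by
  constructor
  · intro hX
    obtain ⟨n, a, b, c, h⟩ := gens_le hX
    exact ⟨n, a, b, c, h⟩
  · rintro ⟨n, a, b, c, hX⟩
    have hAH : AtilGL ∈ Subgroup.closure {AtilGL, TtilGL} :=
      Subgroup.subset_closure (by simp)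
    have hTH : TtilGL ∈ Subgroup.closure {AtilGL, TtilGL} :=
      Subgroup.subset_closure (by simp)
    have hEbH : EbGL ∈ Subgroup.closure {AtilGL, TtilGL} :=
      mul_mem (mul_mem (mul_mem hAH hTH) (pow_mem hAH 4)) (pow_mem hTH 4)
    have hEaH : EaGL ∈ Subgroup.closure {AtilGL, TtilGL} :=
      mul_mem (mul_mem (mul_mem hAH hEbH) (pow_mem hAH 4)) (pow_mem hEbH 4)
    set α : ZMod 5 := 4 * n ^ 3 + n with hα
    set β : ZMod 5 := 2 * n ^ 2 + 2 * n with hβ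
    set γ : ZMod 5 := 4 * n with hγ
    set l : ZMod 5 := c - γ with hl
    set k : ZMod 5 := b - β - n * l with hk
    set j : ZMod 5 := a - α - n * k - (3 * n ^ 2 + 2 * n) * l with hj
    have key : X = AtilGL ^ n.val * EaGL ^ j.val * EbGL ^ k.val * TtilGL ^ l.val := by
      apply Units.ext
      rw [Units.val_mul, Units.val_mul, Units.val_mul,
        Units.val_pow_eq_pow_val, Units.val_pow_eq_pow_val,
        Units.val_pow_eq_pow_val, Units.val_pow_eq_pow_val,
        AtilGL_val, EaGL_val, EbGL_val, TtilGL_val,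
        A_pow, Ea_pow, Eb_pow, Tt_pow, ZMod.natCast_val, ZMod.natCast_val,
        ZMod.natCast_val, ZMod.natCast_val, ZMod.cast_id, ZMod.cast_id,
        ZMod.cast_id, ZMod.cast_id, Mm_mul, Mm_mul, Mm_mul, hX]
      exact Mm_congr (by ring) (by rw [hj]; ring) (by rw [hk]; ring)
        (by rw [hl, hγ]; ring)
    rw [key]
    exact mul_mem (mul_mem (mul_mem (pow_mem hAH _) (pow_mem hEaH _))
      (pow_mem hEbH _)) (pow_mem hTH _)
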